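/- arXiv:1712.07824 — 4 statements merged into one kernel-verified Lean document; each statement's English description precedes it below -/
import Mathlib

section
/- For all real numbers x, y > 1, the Beta function satisfies B(x,y) ≤ 1/(xy). -/
open intervalIntegral

/-- The Euler Beta function `B(x,y) = ∫₀¹ z^(x-1) (1-z)^(y-1) dz`. -/
noncomputable def betaFun (x y : ℝ) : ℝ :=
  ∫ z in (0:ℝ)..1, z ^ (x - 1) * (1 - z) ^ (y - 1)

lemma integral_rpow_aux {p : ℝ} (hp : 1 < p) :
    (∫ z in (0:ℝ)..1, z ^ (p - 1)) = 1 / p := by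
  rw [integral_rpow (Or.inl (by linarith))]
  rw [Real.one_rpow, Real.zero_rpow (by linarith : p - 1 + 1 ≠ 0)]
  norm_num

/-- For all real `x, y > 1`, `B(x,y) ≤ 1/(x*y)`. -/
theorem beta_le_inv_mul (x y : ℝ) (hx : 1 < x) (hy : 1 < y) :
    betaFun x y ≤ 1 / (x * y) := by
  set f : ℝ → ℝ := fun z => z ^ (x - 1) with hf
  set g : ℝ → ℝ := fun z => (1 - z) ^ (y - 1) with hg
  have hfc : Continuous f := Real.continuous_rpow_const (by linarith)
  have hgc : Continuous g :=
    (Real.continuous_rpow_const (q := y - 1) (by linarith)).comp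
      (continuous_const.sub continuous_id)
  have hA : (∫ z in (0:ℝ)..1, f z) = 1 / x := integral_rpow_aux hx
  have hB : (∫ z in (0:ℝ)..1, g z) = 1 / y := by
    have := intervalIntegral.integral_comp_sub_left (fun z => z ^ (y - 1)) 1 (a := 0) (b := 1)
    simp only [sub_zero, sub_self] at this
    rw [hg]
    simp only [this]
    exact integral_rpow_aux hy
  -- pointwise rearrangement inequality
  have key : ∀ s ∈ Set.Icc (0:ℝ) 1, ∀ t ∈ Set.Icc (0:ℝ) 1,
      f s * g s + f t * g t ≤ f s * g t + f t * g s := by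
    intro s hs t ht
    have hmain : (f s - f t) * (g s - g t) ≤ 0 := by
      rcases le_total s t with h | h
      · have h1 : f s ≤ f t := Real.rpow_le_rpow hs.1 h (by linarith)
        have h2 : g t ≤ g s := Real.rpow_le_rpow (by linarith [ht.2]) (by linarith) (by linarith)
        nlinarith
      · have h1 : f t ≤ f s := Real.rpow_le_rpow ht.1 h (by linarith)
        have h2 : g s ≤ g t := Real.rpow_le_rpow (by linarith [hs.2]) (by linarith) (by linarith)
        nlinarith
    nlinarith
  set I : ℝ := ∫ z in (0:ℝ)..1, f z * g z with hI
  -- step 1: for each t ∈ [0,1]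
  have step1 : ∀ t ∈ Set.Icc (0:ℝ) 1,
      I + f t * g t ≤ g t * (1 / x) + f t * (1 / y) := by
    intro t ht
    have hmono : (∫ s in (0:ℝ)..1, (f s * g s + f t * g t))
        ≤ ∫ s in (0:ℝ)..1, (f s * g t + f t * g s) := by
      apply intervalIntegral.integral_mono_on (by norm_num)
      · exact ((hfc.mul hgc).add continuous_const).intervalIntegrable _ _
      · exact ((hfc.mul continuous_const).add (continuous_const.mul hgc)).intervalIntegrable _ _
      · intro s hs
        exact key s hs t ht
    rw [intervalIntegral.integral_add (f := fun s => f s * g s) ((hfc.mul hgc).intervalIntegrable _ _)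
        (intervalIntegrable_const), intervalIntegral.integral_add
        (f := fun s => f s * g t) (g := fun s => f t * g s) ((hfc.mul continuous_const).intervalIntegrable _ _)
        ((continuous_const.mul hgc).intervalIntegrable _ _),
        intervalIntegral.integral_const, intervalIntegral.integral_mul_const,
        intervalIntegral.integral_const_mul, hA, hB] at hmono
    simpa [mul_comm] using hmono
  -- step 2: integrate over t
  have step2 : (∫ t in (0:ℝ)..1, (I + f t * g t))
      ≤ ∫ t in (0:ℝ)..1, (g t * (1 / x) + f t * (1 / y)) := by
    apply intervalIntegral.integral_mono_on (by norm_num)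
    · exact (continuous_const.add (hfc.mul hgc)).intervalIntegrable _ _
    · exact ((hgc.mul continuous_const).add (hfc.mul continuous_const)).intervalIntegrable _ _
    · exact step1
  rw [intervalIntegral.integral_add (g := fun t => f t * g t) intervalIntegrable_const
      ((hfc.mul hgc).intervalIntegrable _ _), intervalIntegral.integral_add
      (f := fun t => g t * (1 / x)) (g := fun t => f t * (1 / y)) ((hgc.mul continuous_const).intervalIntegrable _ _)
      ((hfc.mul continuous_const).intervalIntegrable _ _),
      intervalIntegral.integral_const, intervalIntegral.integral_mul_const,
      intervalIntegral.integral_mul_const, hA, hB] at step2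
  simp only [sub_zero, smul_eq_mul, one_mul, ← hI] at step2
  have hbe : betaFun x y = I := rfl
  have hxy : (0:ℝ) < x * y := by positivity
  have hre : (1:ℝ) / x * (1 / y) + 1 / y * (1 / x) = 2 * (1 / (x * y)) := by
    field_simp
    ring
  rw [hbe]
  linarith [step2]
end

section
/- For all real x with 0 ≤ x ≤ 1, we have 2^{x-1} ≤ Γ(x+1) ≤ 1. -/
/-- For all real `x` with `0 ≤ x ≤ 1`, `2^(x-1) ≤ Γ(x+1) ≤ 1`. -/
theorem gamma_bounds_on_unit_interval (x : ℝ) (hx0 : 0 ≤ x) (hx1 : x ≤ 1) :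
    (2 : ℝ) ^ (x - 1) ≤ Real.Gamma (x + 1) ∧ Real.Gamma (x + 1) ≤ 1 := by
  have hx1pos : (0 : ℝ) < x + 1 := by linarith
  have hG1 : Real.Gamma 1 = 1 := Real.Gamma_one
  have hG2 : Real.Gamma 2 = 1 := Real.Gamma_two
  have hpos : 0 < Real.Gamma (x + 1) := Real.Gamma_pos_of_pos hx1pos
  constructor
  · -- lower bound via log-convexity
    have hconv := Real.convexOn_log_Gamma.2 (x := x + 1) (y := x + 2)
      (by simpa using hx1pos) (by simp; linarith) hx0 (by linarith : 0 ≤ 1 - x)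
      (by ring)
    simp only [smul_eq_mul] at hconv
    have hcomb : x * (x + 1) + (1 - x) * (x + 2) = 2 := by ring
    rw [hcomb] at hconv
    have hG12 : Real.Gamma (x + 2) = (x + 1) * Real.Gamma (x + 1) := by
      have := Real.Gamma_add_one (s := x + 1) (ne_of_gt hx1pos)
      rw [show x + 1 + 1 = x + 2 by ring] at this
      exact this
    simp only [Function.comp, hG2, Real.log_one, hG12] at hconv
    rw [Real.log_mul (by positivity) (ne_of_gt hpos)] at hconv
    have hlog2 : Real.log (x + 1) ≤ Real.log 2 := by
      apply Real.log_le_log (by positivity); linarith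
    have hL : (x - 1) * Real.log 2 ≤ Real.log (Real.Gamma (x + 1)) := by
      nlinarith [hconv]
    calc (2 : ℝ) ^ (x - 1) = Real.exp ((x - 1) * Real.log 2) := by
          rw [Real.rpow_def_of_pos (by norm_num), mul_comm]
      _ ≤ Real.exp (Real.log (Real.Gamma (x + 1))) := Real.exp_le_exp.mpr hL
      _ = Real.Gamma (x + 1) := Real.exp_log hpos
  · -- upper bound via convexity
    have hconv := Real.convexOn_Gamma.2 (x := (1 : ℝ)) (y := (2 : ℝ))
      (by norm_num) (by norm_num) (by linarith : 0 ≤ 1 - x) hx0 (by ring)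
    simp only [smul_eq_mul] at hconv
    have : (1 - x) * (1 : ℝ) + x * 2 = x + 1 := by ring
    rw [this, hG1, hG2] at hconv
    calc Real.Gamma (x + 1) ≤ (1 - x) * 1 + x * 1 := hconv
      _ = 1 := by ring
end

section
/- For all real x > 1, x^{x-γ}/e^{x-1} < Γ(x) < x^{x-1/2}/e^{x-1}, where γ ≈ 0.577215 is the Euler–Mascheroni constant. -/
open Real Filter Topology Set


noncomputable def lphi (y : ℝ) : ℝ := 1/y - (Real.log (y+1) - Real.log y)


lemma lphi_nonneg {y : ℝ} (hy : 0 < y) : 0 ≤ lphi y := by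
  have h := Real.log_le_sub_one_of_pos (x := (y+1)/y) (by positivity)
  rw [Real.log_div (by positivity) (ne_of_gt hy)] at h
  have : (y+1)/y - 1 = 1/y := by field_simp; ring
  rw [this] at h
  simpa [lphi] using h

lemma hasSum_telescope {f : ℕ → ℝ} (hmono : ∀ n, f (n+1) ≤ f n)
    (hlim : Filter.Tendsto f atTop (𝓝 0)) :
    HasSum (fun n => f n - f (n+1)) (f 0) := by
  rw [hasSum_iff_tendsto_nat_of_nonneg (fun i => by linarith [hmono i])]
  have : ∀ n : ℕ, ∑ i ∈ Finset.range n, (f i - f (i+1)) = f 0 - f n := by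
    intro n; exact Finset.sum_range_sub' f n
  simp_rw [this]
  simpa using tendsto_const_nhds.sub hlim


lemma lphi_le {y : ℝ} (hy : 0 < y) : lphi y ≤ 1/y - 1/(y+1) := by
  have h := Real.log_le_sub_one_of_pos (x := y/(y+1)) (by positivity)
  rw [Real.log_div (ne_of_gt hy) (by positivity)] at h
  have : y/(y+1) - 1 = -(1/(y+1)) := by field_simp; ring
  rw [this] at h
  simp only [lphi]; linarith

/-- if h has negative derivative on (0,∞) and tends to 0 at infinity, it is positive -/
lemma pos_of_deriv_neg {h h' : ℝ → ℝ} (hd : ∀ y ∈ Ioi (0:ℝ), HasDerivAt h (h' y) y)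
    (hneg : ∀ y ∈ Ioi (0:ℝ), h' y < 0) (hlim : Tendsto h atTop (𝓝 0)) :
    ∀ y : ℝ, 0 < y → 0 < h y := by
  intro y hy
  have hanti : StrictAntiOn h (Ioi (0:ℝ)) := by
    apply strictAntiOn_of_deriv_neg (convex_Ioi 0)
    · exact fun z hz => ((hd z hz).continuousAt).continuousWithinAt
    · intro z hz
      rw [interior_Ioi] at hz
      rw [(hd z hz).deriv]; exact hneg z hz
  have h1 : (0:ℝ) ≤ h (y+1) := by
    refine le_of_tendsto hlim ?_
    filter_upwards [eventually_gt_atTop (y+1)] with z hz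
    exact (hanti (by exact Set.mem_Ioi.2 (by linarith)) (by exact Set.mem_Ioi.2 (by linarith)) hz).le
  have := hanti (mem_Ioi.2 hy) (by exact Set.mem_Ioi.2 (by linarith)) (by linarith : y < y + 1)
  linarith


lemma tendsto_inv_real : Tendsto (fun y : ℝ => 1/y) atTop (𝓝 0) := by
  simpa [one_div] using tendsto_inv_atTop_zero

lemma tendsto_inv_shift (c : ℝ) : Tendsto (fun y : ℝ => 1/(y+c)) atTop (𝓝 0) :=
  tendsto_inv_real.comp (tendsto_atTop_add_const_right _ c tendsto_id)

lemma tendsto_log_succ_sub : Tendsto (fun y : ℝ => Real.log (y+1) - Real.log y) atTop (𝓝 0) := by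
  have h1 : Tendsto (fun y : ℝ => 1 + 1/y) atTop (𝓝 1) := by
    simpa using tendsto_const_nhds.add tendsto_inv_real
  have h2 : Tendsto (fun y : ℝ => Real.log (1 + 1/y)) atTop (𝓝 0) := by
    have := (Real.continuousAt_log (x := 1) one_ne_zero).tendsto.comp h1
    simpa [Function.comp_def] using this
  refine h2.congr' ?_
  filter_upwards [eventually_gt_atTop (0:ℝ)] with y hy
  rw [← Real.log_div (by positivity) (ne_of_gt hy)]
  congr 1
  field_simp


lemma tendsto_inv_sq : Tendsto (fun y : ℝ => 1/y^2) atTop (𝓝 0) := by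
  have := tendsto_inv_real.mul tendsto_inv_real
  simpa using this.congr (fun z => by ring)

lemma tendsto_inv_sq_shift : Tendsto (fun y : ℝ => 1/(y+1)^2) atTop (𝓝 0) :=
  tendsto_inv_sq.comp (tendsto_atTop_add_const_right _ 1 tendsto_id)

lemma d_inv {y : ℝ} (hy : 0 < y) : HasDerivAt (fun y : ℝ => 1/y) (-(1/y^2)) y := by
  simpa [one_div] using hasDerivAt_inv (ne_of_gt hy)

lemma d_inv1 {y : ℝ} (hy : 0 < y) : HasDerivAt (fun y : ℝ => 1/(y+1)) (-(1/(y+1)^2)) y := by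
  have := (hasDerivAt_inv (by positivity : y+1 ≠ 0)).comp y ((hasDerivAt_id y).add_const 1)
  simpa [one_div, Function.comp_def] using this

lemma d_log1 {y : ℝ} (hy : 0 < y) : HasDerivAt (fun y : ℝ => Real.log (y+1)) (1/(y+1)) y := by
  have := (Real.hasDerivAt_log (by positivity : y+1 ≠ 0)).comp y ((hasDerivAt_id y).add_const 1)
  simpa [one_div, Function.comp_def] using this

lemma d_log {y : ℝ} (hy : 0 < y) : HasDerivAt Real.log (1/y) y := by
  simpa [one_div] using Real.hasDerivAt_log (ne_of_gt hy)

lemma d_inv2 {y : ℝ} (hy : 0 < y) : HasDerivAt (fun y : ℝ => 1/y^2) (-(2/y^3)) y := by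
  have := ((hasDerivAt_pow 2 y).inv (pow_ne_zero 2 (ne_of_gt hy)))
  have e : -(↑(2:ℕ) * y ^ (2-1)) / (y^2)^2 = -(2/y^3) := by
    have h1 : y ≠ 0 := ne_of_gt hy
    field_simp; ring
  rw [e] at this
  simpa [one_div, Pi.inv_def] using this

lemma d_inv2' {y : ℝ} (hy : 0 < y) : HasDerivAt (fun y : ℝ => 1/(y+1)^2) (-(2/(y+1)^3)) y := by
  have h1 : HasDerivAt (fun y : ℝ => y + 1) 1 y := (hasDerivAt_id y).add_const 1
  have := (((hasDerivAt_pow 2 (y+1)).comp y h1).inv (pow_ne_zero 2 (by positivity)))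
  have e : -(↑(2:ℕ) * (y+1) ^ (2-1) * 1) / (((fun x : ℝ => x ^ 2) ∘ fun y => y + 1) y)^2 = -(2/(y+1)^3) := by
    have h2 : y + 1 ≠ 0 := by positivity
    simp only [Function.comp_apply]
    field_simp; ring
  replace this := this.congr_deriv e
  simp only [one_div]; exact this

lemma P1 {y : ℝ} (hy : 0 < y) : (1/y - 1/(y+1))/2 < lphi y := by
  have key : ∀ z : ℝ, 0 < z →
      0 < (1/z + 1/(z+1))/2 - (Real.log (z+1) - Real.log z) := by
    refine pos_of_deriv_neg (h' := fun z => -(1/(2*z^2*(z+1)^2))) ?_ ?_ ?_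
    · intro z hz
      rw [mem_Ioi] at hz
      have H := (((d_inv hz).add (d_inv1 hz)).div_const 2).sub ((d_log1 hz).sub (d_log hz))
      refine H.congr_deriv ?_
      have h1 : z ≠ 0 := ne_of_gt hz
      have h2 : z + 1 ≠ 0 := by positivity
      field_simp
      ring
    · intro z hz; rw [mem_Ioi] at hz
      simp only [Left.neg_neg_iff]; positivity
    · have := ((tendsto_inv_real.add (tendsto_inv_shift 1)).div_const 2).sub tendsto_log_succ_sub
      simpa using this
  have := key y hy
  simp only [lphi]
  linarith

lemma P2 {y : ℝ} (hy : 0 < y) :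
    lphi y ≤ (1/y - 1/(y+1))/2 + (1/y^2 - 1/(y+1)^2)/12 := by
  have key : ∀ z : ℝ, 0 < z →
      0 < (1/z - 1/(z+1))/2 + (1/z^2 - 1/(z+1)^2)/12 - 1/z
          + (Real.log (z+1) - Real.log z) := by
    refine pos_of_deriv_neg (h' := fun z => -(1/(6*z^3*(z+1)^3))) ?_ ?_ ?_
    · intro z hz
      rw [mem_Ioi] at hz
      have H := (((((d_inv hz).sub (d_inv1 hz)).div_const 2).add
        (((d_inv2 hz).sub (d_inv2' hz)).div_const 12)).sub (d_inv hz)).add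
        ((d_log1 hz).sub (d_log hz))
      refine H.congr_deriv ?_
      have h1 : z ≠ 0 := ne_of_gt hz
      have h2 : z + 1 ≠ 0 := by positivity
      field_simp
      ring
    · intro z hz; rw [mem_Ioi] at hz
      simp only [Left.neg_neg_iff]; positivity
    · have := ((((tendsto_inv_real.sub (tendsto_inv_shift 1)).div_const 2).add
        ((tendsto_inv_sq.sub tendsto_inv_sq_shift).div_const 12)).sub tendsto_inv_real).add
        tendsto_log_succ_sub
      simpa using this
  have := key y hy
  simp only [lphi]
  linarith

lemma P3' {y : ℝ} (hy : 0 < y) :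
    (1/y^2 - 1/(y+1)^2)/2 + (1/y^3 - 1/(y+1)^3)/6 - (1/y^5 - 1/(y+1)^5)/30
      ≤ 1/(y^2*(y+1)) := by
  have h1 : y ≠ 0 := ne_of_gt hy
  have h2 : y + 1 ≠ 0 := by positivity
  have key : 1/(y^2*(y+1)) - ((1/y^2 - 1/(y+1)^2)/2 + (1/y^3 - 1/(y+1)^3)/6 - (1/y^5 - 1/(y+1)^5)/30)
      = (5*y^2+5*y+1)/(30*y^5*(y+1)^5) := by
    field_simp
    ring
  have pos : 0 ≤ (5*y^2+5*y+1)/(30*y^5*(y+1)^5) := by positivity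
  linarith


lemma npos {x : ℝ} (hx : 0 < x) (n : ℕ) : (0:ℝ) < (n:ℝ) + x := by positivity

lemma hasSum_J {x : ℝ} (hx : 0 < x) (k : ℕ) (hk : k ≠ 0) :
    HasSum (fun n : ℕ => 1/((n:ℝ)+x)^k - 1/((n:ℝ)+x+1)^k) (1/x^k) := by
  have hmono : ∀ n : ℕ, 1/(((n+1:ℕ):ℝ)+x)^k ≤ 1/((n:ℝ)+x)^k := by
    intro n
    apply one_div_le_one_div_of_le (by positivity)
    apply pow_le_pow_left₀ (le_of_lt (npos hx n))
    push_cast; linarith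
  have hlim : Tendsto (fun n : ℕ => 1/((n:ℝ)+x)^k) atTop (𝓝 0) := by
    have h1 : Tendsto (fun n : ℕ => ((n:ℝ)+x)^k) atTop atTop :=
      (tendsto_pow_atTop hk).comp (tendsto_atTop_add_const_right _ x tendsto_natCast_atTop_atTop)
    simpa [one_div, Pi.inv_def] using h1.inv_tendsto_atTop
  have key := hasSum_telescope hmono hlim
  have e1 : (fun n : ℕ => 1/((n:ℝ)+x)^k - 1/(((n+1:ℕ):ℝ)+x)^k)
      = (fun n : ℕ => 1/((n:ℝ)+x)^k - 1/((n:ℝ)+x+1)^k) := by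
    funext n; push_cast; ring_nf
  have e2 : 1/(((0:ℕ):ℝ)+x)^k = 1/x^k := by norm_num
  rw [e1, e2] at key
  exact key

noncomputable def S1 (x : ℝ) : ℝ := ∑' n : ℕ, lphi ((n:ℝ)+x)
noncomputable def Tser (x : ℝ) : ℝ := ∑' n : ℕ, 1/(((n:ℝ)+x)^2*((n:ℝ)+x+1))

lemma summable_lphi {x : ℝ} (hx : 0 < x) : Summable (fun n : ℕ => lphi ((n:ℝ)+x)) := by
  apply Summable.of_nonneg_of_le (fun n => lphi_nonneg (npos hx n))
    (fun n => lphi_le (npos hx n))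
  have := (hasSum_J hx 1 one_ne_zero).summable
  simpa using this

lemma Tser_term_le {y : ℝ} (hy : 0 < y) : 1/(y^2*(y+1)) ≤ 1/y^2 - 1/(y+1)^2 := by
  have h1 : y ≠ 0 := ne_of_gt hy
  have h2 : y + 1 ≠ 0 := by positivity
  have key : 1/y^2 - 1/(y+1)^2 - 1/(y^2*(y+1)) = 1/(y*(y+1)^2) := by
    field_simp; ring
  have pos : (0:ℝ) ≤ 1/(y*(y+1)^2) := by positivity
  linarith

lemma summable_Tser {x : ℝ} (hx : 0 < x) :
    Summable (fun n : ℕ => 1/(((n:ℝ)+x)^2*((n:ℝ)+x+1))) := by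
  apply Summable.of_nonneg_of_le (fun n => by have := npos hx n; positivity)
    (fun n => Tser_term_le (npos hx n))
  exact (hasSum_J hx 2 two_ne_zero).summable

lemma S1_le {x : ℝ} (hx : 0 < x) : S1 x ≤ 1/x/2 + 1/x^2/12 := by
  have hg : HasSum (fun n : ℕ => (1/((n:ℝ)+x) - 1/((n:ℝ)+x+1))/2
      + (1/((n:ℝ)+x)^2 - 1/((n:ℝ)+x+1)^2)/12) (1/x/2 + 1/x^2/12) := by
    have h1 := (hasSum_J hx 1 one_ne_zero).div_const 2
    have h2 := (hasSum_J hx 2 two_ne_zero).div_const 12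
    have := h1.add h2
    simpa using this
  rw [← hg.tsum_eq]
  exact Summable.tsum_le_tsum (fun n => P2 (npos hx n)) (summable_lphi hx) hg.summable

lemma T_ge {x : ℝ} (hx : 0 < x) : 1/x^2/2 + 1/x^3/6 - 1/x^5/30 ≤ Tser x := by
  have hg : HasSum (fun n : ℕ => (1/((n:ℝ)+x)^2 - 1/((n:ℝ)+x+1)^2)/2
      + (1/((n:ℝ)+x)^3 - 1/((n:ℝ)+x+1)^3)/6 - (1/((n:ℝ)+x)^5 - 1/((n:ℝ)+x+1)^5)/30)
      (1/x^2/2 + 1/x^3/6 - 1/x^5/30) := by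
    have h2 := (hasSum_J hx 2 two_ne_zero).div_const 2
    have h3 := (hasSum_J hx 3 three_ne_zero).div_const 6
    have h5 := (hasSum_J hx 5 (by norm_num)).div_const 30
    exact (h2.add h3).sub h5
  rw [← hg.tsum_eq]
  exact Summable.tsum_le_tsum (fun n => P3' (npos hx n)) hg.summable (summable_Tser hx)


lemma hasSum_J1 {x : ℝ} (hx : 0 < x) :
    HasSum (fun n : ℕ => 1/((n:ℝ)+x) - 1/((n:ℝ)+x+1)) (1/x) := by
  have := hasSum_J hx 1 one_ne_zero
  simpa using this

lemma S1_tail_le {x : ℝ} (hx : 0 < x) : S1 x ≤ 1/x := by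
  rw [← (hasSum_J1 hx).tsum_eq]
  exact Summable.tsum_le_tsum (fun n => lphi_le (npos hx n)) (summable_lphi hx)
    (hasSum_J1 hx).summable

lemma S1_nonneg {x : ℝ} (hx : 0 < x) : 0 ≤ S1 x :=
  tsum_nonneg (fun n => lphi_nonneg (npos hx n))

lemma S1_gt {x : ℝ} (hx : 0 < x) : 1/x/2 < S1 x := by
  have hJ := (hasSum_J1 hx).div_const 2
  have e : ∑' n : ℕ, (1/((n:ℝ)+x) - 1/((n:ℝ)+x+1))/2 = 1/x/2 := hJ.tsum_eq
  rw [← e]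
  apply Summable.tsum_lt_tsum_of_nonneg (i := 0)
  · intro b
    have h1 := npos hx b
    have : 1/((b:ℝ)+x+1) ≤ 1/((b:ℝ)+x) := by
      apply one_div_le_one_div_of_le h1; linarith
    linarith
  · exact fun b => (P1 (npos hx b)).le
  · exact P1 (npos hx 0)
  · exact summable_lphi hx

lemma S1_one : S1 1 = Real.eulerMascheroniConstant := by
  have key : HasSum (fun n : ℕ => lphi ((n:ℝ)+1)) Real.eulerMascheroniConstant := by
    rw [hasSum_iff_tendsto_nat_of_nonneg (fun n => lphi_nonneg (npos one_pos n))]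
    have e : ∀ n : ℕ, ∑ i ∈ Finset.range n, lphi ((i:ℝ)+1)
        = (harmonic n : ℝ) - Real.log ((n:ℝ)+1) := by
      intro n
      have e1 : ∀ i : ℕ, lphi ((i:ℝ)+1) = ((1:ℝ)/((i:ℝ)+1))
          - (Real.log (((i+1:ℕ):ℝ)+1) - Real.log ((i:ℝ)+1)) := by
        intro i; simp only [lphi]; push_cast; ring_nf
      simp_rw [e1]
      rw [Finset.sum_sub_distrib, Finset.sum_range_sub (fun i => Real.log ((i:ℝ)+1))]
      have : (harmonic n : ℝ) = ∑ i ∈ Finset.range n, (1:ℝ)/((i:ℝ)+1) := by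
        rw [harmonic]; push_cast; simp [one_div]
      rw [this]; norm_num
    simp_rw [e]
    exact Real.tendsto_eulerMascheroniSeq
  exact key.tsum_eq


-- derivative of a single term t ↦ lphi (c + t)
lemma d_lphi_term (c : ℝ) {t : ℝ} (hc : 0 ≤ c) (ht : 0 < t) :
    HasDerivAt (fun u : ℝ => lphi (c+u)) (-(1/((c+t)^2*(c+t+1)))) t := by
  have hct : 0 < c + t := by linarith
  have hshift : HasDerivAt (fun u : ℝ => c + u) 1 t := (hasDerivAt_id t).const_add c
  have h1 : HasDerivAt (fun u : ℝ => 1/(c+u)) (-(1/(c+t)^2)) t := by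
    have := ((d_inv hct).comp t hshift)
    simpa [Function.comp_def] using this
  have h2 : HasDerivAt (fun u : ℝ => Real.log (c+u)) (1/(c+t)) t := by
    have := (Real.hasDerivAt_log (ne_of_gt hct)).comp t hshift
    simpa [one_div, Function.comp_def] using this
  have hshift1 : HasDerivAt (fun u : ℝ => c + u + 1) 1 t := hshift.add_const 1
  have h3 : HasDerivAt (fun u : ℝ => Real.log (c+u+1)) (1/(c+t+1)) t := by
    have := (Real.hasDerivAt_log (by positivity : c+t+1 ≠ 0)).comp t hshift1
    simpa [one_div, Function.comp_def] using this
  have H := h1.sub (h3.sub h2)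
  have e : -(1/(c+t)^2) - (1/(c+t+1) - 1/(c+t)) = -(1/((c+t)^2*(c+t+1))) := by
    have u1 : c + t ≠ 0 := ne_of_gt hct
    have u2 : c + t + 1 ≠ 0 := by positivity
    field_simp
    ring
  rw [e] at H
  exact H

lemma hasDerivAt_S1 {x : ℝ} (hx : 0 < x) : HasDerivAt S1 (-Tser x) x := by
  set s : Set ℝ := Ioo (x/2) (x+1) with hs
  have hxs : x ∈ s := ⟨by linarith, by linarith⟩
  have hso : IsOpen s := isOpen_Ioo
  have hspos : ∀ t ∈ s, 0 < t := fun t hts => lt_trans (by linarith : (0:ℝ) < x/2) hts.1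
  have key : HasDerivAt S1 (∑' n : ℕ, -(1/(((n:ℝ)+x)^2*((n:ℝ)+x+1)))) x := by
    apply hasDerivAt_of_tendstoUniformlyOn (f := fun N t => ∑ n ∈ Finset.range N, lphi ((n:ℝ)+t))
      (f' := fun N t => ∑ n ∈ Finset.range N, -(1/(((n:ℝ)+t)^2*((n:ℝ)+t+1)))) (l := atTop) hso _ _ _ hxs
    · -- uniform convergence of derivatives
      apply tendstoUniformlyOn_tsum_nat
        (u := fun n : ℕ => 1/(((n:ℝ)+x/2)^2*((n:ℝ)+x/2+1)))
      · exact summable_Tser (by linarith)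
      · intro n t hts
        have h1 : (0:ℝ) < (n:ℝ) + x/2 := npos (by linarith) n
        have h2 : (0:ℝ) < (n:ℝ) + t := npos (hspos t hts) n
        have hle : (n:ℝ) + x/2 ≤ (n:ℝ) + t := by have := hts.1; linarith
        rw [norm_neg, Real.norm_eq_abs, abs_of_pos (by positivity)]
        apply one_div_le_one_div_of_le (by positivity)
        apply mul_le_mul (pow_le_pow_left₀ h1.le hle 2) (by linarith) (by linarith) (by positivity)
    · -- has deriv at for partial sums
      filter_upwards with N
      intro t hts
      exact HasDerivAt.fun_sum (fun n _ => d_lphi_term (n:ℝ) (Nat.cast_nonneg n) (hspos t hts))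
    · -- pointwise convergence
      intro t hts
      exact (summable_lphi (hspos t hts)).hasSum.tendsto_sum_nat
  have e : ∑' n : ℕ, -(1/(((n:ℝ)+x)^2*((n:ℝ)+x+1))) = -Tser x := by
    rw [tsum_neg]; rfl
  rwa [e] at key


lemma sum_lphi_eq {t : ℝ} (ht : 0 < t) (N : ℕ) :
    ∑ n ∈ Finset.range N, lphi ((n:ℝ)+t)
      = ∑ n ∈ Finset.range N, 1/((n:ℝ)+t) - (Real.log ((N:ℝ)+t) - Real.log t) := by
  have e1 : ∀ n : ℕ, lphi ((n:ℝ)+t)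
      = 1/((n:ℝ)+t) - (Real.log (((n+1:ℕ):ℝ)+t) - Real.log ((n:ℝ)+t)) := by
    intro n
    have harg : ((n:ℝ)+t) + 1 = ((n+1:ℕ):ℝ)+t := by push_cast; ring
    simp only [lphi, harg]
  simp_rw [e1]
  rw [Finset.sum_sub_distrib, Finset.sum_range_sub (fun n => Real.log ((n:ℝ)+t))]
  norm_num

lemma S1_split {t : ℝ} (ht : 0 < t) (N : ℕ) :
    S1 t = ∑ n ∈ Finset.range N, lphi ((n:ℝ)+t) + S1 ((N:ℝ)+t) := by
  have h := Summable.sum_add_tsum_nat_add N (summable_lphi ht)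
  have e : ∑' i : ℕ, lphi ((↑(i+N):ℝ)+t) = S1 ((N:ℝ)+t) := by
    apply tsum_congr
    intro i
    congr 1
    push_cast; ring
  rw [S1, ← h, e]

lemma hasDerivAt_logGammaSeq {t : ℝ} (ht : 0 < t) (N : ℕ) :
    HasDerivAt (fun u : ℝ => Real.BohrMollerup.logGammaSeq u N)
      (Real.log N - ∑ m ∈ Finset.range (N+1), 1/((m:ℝ)+t)) t := by
  have h1 : HasDerivAt (fun u : ℝ => u * Real.log N + Real.log (Nat.factorial N))
      (Real.log N) t := (hasDerivAt_mul_const _).add_const _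
  have h2 : HasDerivAt (fun u : ℝ => ∑ m ∈ Finset.range (N+1), Real.log (u + m))
      (∑ m ∈ Finset.range (N+1), 1/((m:ℝ)+t)) t := by
    apply HasDerivAt.fun_sum
    intro m _
    have hm : (0:ℝ) < t + m := by positivity
    have := (Real.hasDerivAt_log (ne_of_gt hm)).comp t ((hasDerivAt_id t).add_const (m:ℝ))
    simpa [one_div, add_comm, Function.comp_def] using this
  have := h1.sub h2
  simpa [Real.BohrMollerup.logGammaSeq, Pi.sub_def] using this

lemma unif_est {x t : ℝ} (hx : 0 < x) (ht2 : x/2 < t) (ht3 : t < x + 1) {N : ℕ} (hN : 1 ≤ N)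
    {ε : ℝ} (hε : (x+3)/(N:ℝ) < ε) :
    dist (Real.log t - S1 t)
      (Real.log N - ∑ m ∈ Finset.range (N+1), 1/((m:ℝ)+t)) < ε := by
  have ht : 0 < t := lt_trans (by linarith) ht2
  have hN0 : (0:ℝ) < (N:ℝ) := by exact_mod_cast hN
  have hNt : (0:ℝ) < (N:ℝ) + t := by linarith
  -- key identity
  have key : (Real.log t - S1 t)
      - (Real.log N - ∑ m ∈ Finset.range (N+1), 1/((m:ℝ)+t))
      = (Real.log ((N:ℝ)+t) - Real.log N) + 1/((N:ℝ)+t) - S1 ((N:ℝ)+t) := by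
    rw [S1_split ht N, sum_lphi_eq ht N, Finset.sum_range_succ]
    ring
  have hA0 : 0 ≤ Real.log ((N:ℝ)+t) - Real.log N :=
    sub_nonneg.2 (Real.log_le_log hN0 (by linarith))
  have hAt : Real.log ((N:ℝ)+t) - Real.log N ≤ t/N := by
    rw [← Real.log_div (by positivity) (ne_of_gt hN0)]
    have := Real.log_le_sub_one_of_pos (x := ((N:ℝ)+t)/N) (by positivity)
    have e : ((N:ℝ)+t)/N - 1 = t/N := by field_simp; ring
    linarith [e ▸ this]
  have hB0 : (0:ℝ) < 1/((N:ℝ)+t) := by positivity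
  have hBN : 1/((N:ℝ)+t) ≤ 1/(N:ℝ) := one_div_le_one_div_of_le hN0 (by linarith)
  have hC0 : 0 ≤ S1 ((N:ℝ)+t) := S1_nonneg hNt
  have hCN : S1 ((N:ℝ)+t) ≤ 1/(N:ℝ) := le_trans (S1_tail_le hNt) hBN
  have htx : t/(N:ℝ) ≤ (x+1)/N := (div_le_div_iff_of_pos_right hN0).mpr (by linarith)
  have h1N : 1/(N:ℝ) ≤ (x+3)/N := (div_le_div_iff_of_pos_right hN0).mpr (by linarith)
  have hxx : (x+1)/(N:ℝ) + 1/(N:ℝ) ≤ (x+3)/(N:ℝ) := by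
    rw [← add_div]
    exact (div_le_div_iff_of_pos_right hN0).mpr (by linarith)
  rw [Real.dist_eq, key, abs_lt]
  constructor <;> linarith

lemma hasDerivAt_logGamma {x : ℝ} (hx : 0 < x) :
    HasDerivAt (fun t => Real.log (Real.Gamma t)) (Real.log x - S1 x) x := by
  set s : Set ℝ := Ioo (x/2) (x+1) with hs
  have hxs : x ∈ s := ⟨by linarith, by linarith⟩
  have hspos : ∀ t ∈ s, 0 < t := fun t hts => lt_trans (by linarith : (0:ℝ) < x/2) hts.1
  have key : HasDerivAt (fun t => Real.log (Real.Gamma t))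
      ((fun t => Real.log t - S1 t) x) x := by
    apply hasDerivAt_of_tendstoUniformlyOn (l := atTop)
      (f := fun N t => Real.BohrMollerup.logGammaSeq t N)
      (f' := fun N t => Real.log N - ∑ m ∈ Finset.range (N+1), 1/((m:ℝ)+t))
      (isOpen_Ioo) _ _ _ hxs
    · rw [Metric.tendstoUniformlyOn_iff]
      intro ε hε
      have hten : Tendsto (fun N : ℕ => (x+3)/(N:ℝ)) atTop (𝓝 0) :=
        Tendsto.div_atTop tendsto_const_nhds tendsto_natCast_atTop_atTop
      have hev : ∀ᶠ N : ℕ in atTop, (x+3)/(N:ℝ) < ε := hten.eventually_lt_const hε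
      filter_upwards [hev, eventually_ge_atTop 1] with N h1 h2
      intro t hts
      exact unif_est hx hts.1 hts.2 h2 h1
    · filter_upwards with N
      intro t hts
      exact hasDerivAt_logGammaSeq (hspos t hts) N
    · intro t hts
      exact Real.BohrMollerup.tendsto_log_gamma (hspos t hts)
  exact key


local notation "γ" => Real.eulerMascheroniConstant

lemma w_pos {x : ℝ} (hx : 1 < x) : 0 < γ - x * S1 x := by
  have hw : ∀ t : ℝ, 0 < t → HasDerivAt (fun u => γ - u * S1 u) (t * Tser t - S1 t) t := by
    intro t ht
    have h1 := (hasDerivAt_id t).mul (hasDerivAt_S1 ht)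
    have h2 := (hasDerivAt_const t γ).sub h1
    refine h2.congr_deriv ?_
    simp only [id_eq]
    ring
  have hmono : StrictMonoOn (fun u => γ - u * S1 u) (Ici 1) := by
    apply strictMonoOn_of_deriv_pos (convex_Ici 1)
    · intro t hts
      exact ((hw t (lt_of_lt_of_le one_pos hts)).continuousAt).continuousWithinAt
    · intro t hts
      rw [interior_Ici, mem_Ioi] at hts
      have ht : 0 < t := lt_trans one_pos hts
      rw [(hw t ht).deriv]
      have hS := S1_le ht
      have hT := T_ge ht
      have e : t*(1/t^2/2 + 1/t^3/6 - 1/t^5/30) - (1/t/2 + 1/t^2/12) = (5*t^2-2)/(60*t^4) := by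
        field_simp
        ring
      have hpos : (0:ℝ) < (5*t^2-2)/(60*t^4) := by
        apply div_pos (by nlinarith) (by positivity)
      nlinarith [mul_le_mul_of_nonneg_left hT (le_of_lt ht)]
  have h1 : (fun u => γ - u * S1 u) 1 = 0 := by simp [S1_one]
  have := hmono (mem_Ici.2 le_rfl) (mem_Ici.2 hx.le) hx
  rw [h1] at this
  exact this

lemma F_pos {x : ℝ} (hx : 1 < x) :
    0 < Real.log (Real.Gamma x) - ((x - γ)*Real.log x - x + 1) := by
  have hF : ∀ t : ℝ, 0 < t → HasDerivAt
      (fun u => Real.log (Real.Gamma u) - ((u - γ)*Real.log u - u + 1))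
      (γ/t - S1 t) t := by
    intro t ht
    have h1 : HasDerivAt (fun u : ℝ => (u - γ)*Real.log u - u + 1)
        (Real.log t + (t - γ)/t - 1) t := by
      have h2 := ((hasDerivAt_id t).sub_const γ).mul (Real.hasDerivAt_log (ne_of_gt ht))
      have h3 := (h2.sub (hasDerivAt_id t)).add_const 1
      refine h3.congr_deriv ?_
      field_simp; simp only [id_eq]
    have h4 := (hasDerivAt_logGamma ht).sub h1
    refine h4.congr_deriv ?_
    field_simp
    ring
  have hmono : StrictMonoOn (fun u => Real.log (Real.Gamma u) - ((u - γ)*Real.log u - u + 1))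
      (Ici 1) := by
    apply strictMonoOn_of_deriv_pos (convex_Ici 1)
    · intro t hts
      exact ((hF t (lt_of_lt_of_le one_pos hts)).continuousAt).continuousWithinAt
    · intro t hts
      rw [interior_Ici, mem_Ioi] at hts
      have ht : 0 < t := lt_trans one_pos hts
      rw [(hF t ht).deriv]
      have := w_pos hts
      have e : γ/t - S1 t = (γ - t * S1 t)/t := by field_simp
      rw [e]
      exact div_pos this ht
  have h1 : (fun u => Real.log (Real.Gamma u) - ((u - γ)*Real.log u - u + 1)) 1 = 0 := by
    simp [Real.Gamma_one]
  have := hmono (mem_Ici.2 le_rfl) (mem_Ici.2 hx.le) hx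
  rw [h1] at this
  exact this

lemma G_pos {x : ℝ} (hx : 1 < x) :
    0 < ((x - 1/2)*Real.log x - x + 1) - Real.log (Real.Gamma x) := by
  have hG : ∀ t : ℝ, 0 < t → HasDerivAt
      (fun u => ((u - 1/2)*Real.log u - u + 1) - Real.log (Real.Gamma u))
      (S1 t - 1/t/2) t := by
    intro t ht
    have h1 : HasDerivAt (fun u : ℝ => (u - 1/2)*Real.log u - u + 1)
        (Real.log t + (t - 1/2)/t - 1) t := by
      have h2 := ((hasDerivAt_id t).sub_const (1/2)).mul (Real.hasDerivAt_log (ne_of_gt ht))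
      have h3 := (h2.sub (hasDerivAt_id t)).add_const 1
      refine h3.congr_deriv ?_
      field_simp; simp only [id_eq]; ring
    have h4 := h1.sub (hasDerivAt_logGamma ht)
    refine h4.congr_deriv ?_
    field_simp
    ring
  have hmono : StrictMonoOn
      (fun u => ((u - 1/2)*Real.log u - u + 1) - Real.log (Real.Gamma u)) (Ici 1) := by
    apply strictMonoOn_of_deriv_pos (convex_Ici 1)
    · intro t hts
      exact ((hG t (lt_of_lt_of_le one_pos hts)).continuousAt).continuousWithinAt
    · intro t hts
      rw [interior_Ici, mem_Ioi] at hts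
      have ht : 0 < t := lt_trans one_pos hts
      rw [(hG t ht).deriv]
      have := S1_gt ht
      linarith
  have h1 : (fun u => ((u - 1/2)*Real.log u - u + 1) - Real.log (Real.Gamma u)) 1 = 0 := by
    simp [Real.Gamma_one]
  have := hmono (mem_Ici.2 le_rfl) (mem_Ici.2 hx.le) hx
  rw [h1] at this
  exact this

/-- For all real `x > 1`, `x^(x-γ)/e^(x-1) < Γ(x) < x^(x-1/2)/e^(x-1)`,
where `γ` is the Euler–Mascheroni constant. -/
theorem gamma_strict_bounds (x : ℝ) (hx : 1 < x) :
    x ^ (x - Real.eulerMascheroniConstant) / Real.exp (x - 1) < Real.Gamma x ∧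
    Real.Gamma x < x ^ (x - 1/2) / Real.exp (x - 1) := by
  have h0 : (0:ℝ) < x := lt_trans one_pos hx
  have hg : 0 < Real.Gamma x := Real.Gamma_pos_of_pos h0
  have hF := F_pos hx
  have hG := G_pos hx
  constructor
  · rw [← Real.exp_log hg, Real.rpow_def_of_pos h0, ← Real.exp_sub]
    apply Real.exp_lt_exp.mpr
    nlinarith [hF]
  · rw [← Real.exp_log hg, Real.rpow_def_of_pos h0, ← Real.exp_sub]
    apply Real.exp_lt_exp.mpr
    nlinarith [hG]
end

section
/- For β ∈ (0,1), the sequence A_j = Γ(2jβ+1)/Γ((2j+1)β+1) is strictly decreasing in j ≥ 1, i.e. A_j < A_{j-1} for all j ≥ 2. -/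
open MeasureTheory Set

lemma beta_integrable_aux {a b : ℝ} (ha : 0 < a) (hb : 0 < b) :
    IntegrableOn (fun t : ℝ => t ^ (a - 1) * (1 - t) ^ (b - 1)) (Ioo 0 1) := by
  have h := Complex.betaIntegral_convergent (u := (a : ℂ)) (v := (b : ℂ))
    (by simpa using ha) (by simpa using hb)
  have h2 : IntegrableOn
      (fun x : ℝ => (x : ℂ) ^ ((a : ℂ) - 1) * (1 - (x : ℂ)) ^ ((b : ℂ) - 1)) (Ioo 0 1) :=
    ((intervalIntegrable_iff_integrableOn_Ioc_of_le zero_le_one).mp h).mono_set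
      Ioo_subset_Ioc_self
  refine IntegrableOn.congr_fun h2.norm (fun x hx => ?_) measurableSet_Ioo
  obtain ⟨hx0, hx1⟩ := hx
  have h1x : (0:ℝ) < 1 - x := by linarith
  rw [norm_mul]
  rw [show (1 : ℂ) - (x:ℂ) = ((1 - x : ℝ) : ℂ) by push_cast; ring]
  rw [Complex.norm_cpow_eq_rpow_re_of_pos hx0, Complex.norm_cpow_eq_rpow_re_of_pos h1x]
  norm_num

lemma beta_value_aux {a b : ℝ} (ha : 0 < a) (hb : 0 < b) :
    Real.Gamma a * Real.Gamma b
      = Real.Gamma (a + b) * ∫ t in Ioo (0:ℝ) 1, t ^ (a - 1) * (1 - t) ^ (b - 1) := by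
  have h := Complex.Gamma_mul_Gamma_eq_betaIntegral (s := (a : ℂ)) (t := (b : ℂ))
    (by simpa using ha) (by simpa using hb)
  have hbeta : Complex.betaIntegral (a : ℂ) (b : ℂ)
      = ((∫ t in Ioo (0:ℝ) 1, t ^ (a - 1) * (1 - t) ^ (b - 1) : ℝ) : ℂ) := by
    rw [Complex.betaIntegral, intervalIntegral.integral_of_le zero_le_one,
      integral_Ioc_eq_integral_Ioo]
    rw [show ((∫ t in Ioo (0:ℝ) 1, t ^ (a - 1) * (1 - t) ^ (b - 1) : ℝ) : ℂ)
        = ∫ t in Ioo (0:ℝ) 1, ((t ^ (a - 1) * (1 - t) ^ (b - 1) : ℝ) : ℂ)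
      from integral_ofReal.symm]
    refine setIntegral_congr_fun measurableSet_Ioo fun x hx => ?_
    obtain ⟨hx0, hx1⟩ := hx
    have h1x : (0:ℝ) ≤ 1 - x := by linarith
    push_cast [Complex.ofReal_cpow hx0.le, Complex.ofReal_cpow h1x]
    ring
  rw [hbeta] at h
  have := h
  rw [show (a : ℂ) + (b : ℂ) = ((a + b : ℝ) : ℂ) by push_cast; ring] at this
  rw [Complex.Gamma_ofReal, Complex.Gamma_ofReal, Complex.Gamma_ofReal] at this
  exact_mod_cast this

lemma beta_strict_aux {a1 a2 b : ℝ} (h0 : 0 < a1) (h12 : a1 < a2) (hb : 0 < b) :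
    ∫ t in Ioo (0:ℝ) 1, t ^ (a2 - 1) * (1 - t) ^ (b - 1)
      < ∫ t in Ioo (0:ℝ) 1, t ^ (a1 - 1) * (1 - t) ^ (b - 1) := by
  have hi1 := beta_integrable_aux h0 hb
  have hi2 := beta_integrable_aux (h0.trans h12) hb
  set f : ℝ → ℝ := fun t => t ^ (a1 - 1) * (1 - t) ^ (b - 1) - t ^ (a2 - 1) * (1 - t) ^ (b - 1)
    with hf
  have hpos : ∀ t ∈ Ioo (0:ℝ) 1, 0 < f t := by
    intro t ht
    obtain ⟨ht0, ht1⟩ := ht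
    have h1 : t ^ (a2 - 1) < t ^ (a1 - 1) :=
      Real.rpow_lt_rpow_of_exponent_gt ht0 ht1 (by linarith)
    have h2 : (0:ℝ) < (1 - t) ^ (b - 1) := Real.rpow_pos_of_pos (by linarith) _
    have : 0 < (t ^ (a1 - 1) - t ^ (a2 - 1)) * (1 - t) ^ (b - 1) :=
      mul_pos (by linarith) h2
    simpa [hf, sub_mul] using this
  have key : 0 < ∫ t in Ioo (0:ℝ) 1, f t := by
    rw [setIntegral_pos_iff_support_of_nonneg_ae]
    · refine lt_of_lt_of_le ?_ (measure_mono (fun t ht => ⟨(hpos t ht).ne', ht⟩))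
      simp [Real.volume_Ioo]
    · exact (ae_restrict_iff' measurableSet_Ioo).mpr
        (Filter.Eventually.of_forall fun t ht => (hpos t ht).le)
    · exact hi1.sub hi2
  rw [integral_sub hi1 hi2] at key
  linarith

/-- For `β ∈ (0,1)`, the sequence `A_j = Γ(2jβ+1)/Γ((2j+1)β+1)` is strictly
decreasing in `j ≥ 1`, i.e. `A_j < A_{j-1}` for all `j ≥ 2`. -/
theorem gamma_ratio_strict_anti (β : ℝ) (hβ0 : 0 < β) (hβ1 : β < 1)
    (j : ℕ) (hj : 2 ≤ j) :
    Real.Gamma (2 * j * β + 1) / Real.Gamma ((2 * j + 1) * β + 1) <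
      Real.Gamma (2 * (j - 1 : ℕ) * β + 1) / Real.Gamma ((2 * (j - 1 : ℕ) + 1) * β + 1) := by
  have hc : ((j - 1 : ℕ) : ℝ) = (j : ℝ) - 1 := by
    have : 1 ≤ j := le_trans one_le_two hj
    push_cast [Nat.cast_sub this]
    ring
  rw [hc]
  have hj2 : (2:ℝ) ≤ (j : ℝ) := by exact_mod_cast hj
  set x1 : ℝ := 2 * ((j:ℝ) - 1) * β + 1 with hx1def
  set x2 : ℝ := (2 * ((j:ℝ) - 1) + 1) * β + 1 with hx2def
  have hx1 : 0 < x1 := by nlinarith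
  have hx2 : 0 < x2 := by nlinarith
  have h12 : x1 < x2 := by simp only [hx1def, hx2def]; nlinarith
  have h2β : 0 < 2 * β := by linarith
  have e1 := beta_value_aux hx1 h2β
  have e2 := beta_value_aux hx2 h2β
  have hxy1 : x1 + 2 * β = 2 * (j:ℝ) * β + 1 := by simp only [hx1def]; ring
  have hxy2 : x2 + 2 * β = (2 * (j:ℝ) + 1) * β + 1 := by simp only [hx2def]; ring
  rw [hxy1] at e1
  rw [hxy2] at e2
  set I1 : ℝ := ∫ t in Ioo (0:ℝ) 1, t ^ (x1 - 1) * (1 - t) ^ (2 * β - 1) with hI1def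
  set I2 : ℝ := ∫ t in Ioo (0:ℝ) 1, t ^ (x2 - 1) * (1 - t) ^ (2 * β - 1) with hI2def
  have hI : I2 < I1 := beta_strict_aux hx1 h12 h2β
  have hΓx1 : 0 < Real.Gamma x1 := Real.Gamma_pos_of_pos hx1
  have hΓx2 : 0 < Real.Gamma x2 := Real.Gamma_pos_of_pos hx2
  have hΓ2β : 0 < Real.Gamma (2 * β) := Real.Gamma_pos_of_pos h2β
  have hΓy1 : 0 < Real.Gamma (2 * (j:ℝ) * β + 1) := Real.Gamma_pos_of_pos (by nlinarith)
  have hΓy2 : 0 < Real.Gamma ((2 * (j:ℝ) + 1) * β + 1) := Real.Gamma_pos_of_pos (by nlinarith)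
  have hI1 : 0 < I1 := by
    by_contra h
    push_neg at h
    nlinarith [mul_pos hΓx1 hΓ2β, mul_nonneg hΓy1.le (neg_nonneg.mpr h)]
  have hI2 : 0 < I2 := by
    by_contra h
    push_neg at h
    nlinarith [mul_pos hΓx2 hΓ2β, mul_nonneg hΓy2.le (neg_nonneg.mpr h)]
  rw [div_lt_div_iff₀ hΓy2 hΓx2]
  have lhs_eq : Real.Gamma (2 * (j:ℝ) * β + 1) * Real.Gamma x2 * (I1 * I2)
      = (Real.Gamma x1 * Real.Gamma (2 * β) * Real.Gamma x2) * I2 := by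
    linear_combination (Real.Gamma x2 * I2) * e1.symm
  have rhs_eq : Real.Gamma x1 * Real.Gamma ((2 * (j:ℝ) + 1) * β + 1) * (I1 * I2)
      = (Real.Gamma x1 * Real.Gamma (2 * β) * Real.Gamma x2) * I1 := by
    linear_combination (Real.Gamma x1 * I1) * e2.symm
  have h3 : (Real.Gamma x1 * Real.Gamma (2 * β) * Real.Gamma x2) * I2
      < (Real.Gamma x1 * Real.Gamma (2 * β) * Real.Gamma x2) * I1 :=
    mul_lt_mul_of_pos_left hI (by positivity)
  have h4 : Real.Gamma (2 * (j:ℝ) * β + 1) * Real.Gamma x2 * (I1 * I2)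
      < Real.Gamma x1 * Real.Gamma ((2 * (j:ℝ) + 1) * β + 1) * (I1 * I2) := by
    rw [lhs_eq, rhs_eq]; exact h3
  exact lt_of_mul_lt_mul_right h4 (by positivity)
end
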